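/- Let Θ ⊆ ℝⁿ be a compact convex set with vol(Θ) > 0 (Lebesgue measure), and let φ : Θ → ℝ be a bounded concave function. Then lim_{l → ∞, l ∈ ℕ*} (1/lⁿ) ∑_{e ∈ lΘ ∩ ℤⁿ} φ(e/l) = ∫_Θ φ(x) dx, where the sum runs over the integer lattice points e of the dilate lΘ = {l x : x ∈ Θ} (note e/l ∈ Θ for such e), and the integral is with respect to Lebesgue measure on ℝⁿ. -/

import Mathlib

open MeasureTheory Pointwise


lemma aux_floor_tendsto (a : ℝ) :
    Filter.Tendsto (fun l : ℕ => ((⌊(l : ℝ) * a⌋ : ℤ) : ℝ) / l) Filter.atTop (nhds a) := by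
  have h1 : Filter.Tendsto (fun l : ℕ => a - 1 / (l : ℝ)) Filter.atTop (nhds a) := by
    simpa using tendsto_const_nhds.sub (tendsto_one_div_atTop_nhds_zero_nat (𝕜 := ℝ))
  refine tendsto_of_tendsto_of_tendsto_of_le_of_le' h1 tendsto_const_nhds ?_ ?_
  · filter_upwards [Filter.eventually_ge_atTop 1] with l hl
    have hL : (0 : ℝ) < l := by exact_mod_cast hl
    rw [le_div_iff₀ hL]
    have h2 : (a - 1 / (l : ℝ)) * l = (l : ℝ) * a - 1 := by
      field_simp
    have := Int.sub_one_lt_floor ((l : ℝ) * a)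
    linarith
  · filter_upwards [Filter.eventually_ge_atTop 1] with l hl
    have hL : (0 : ℝ) < l := by exact_mod_cast hl
    rw [div_le_iff₀ hL]
    have := Int.floor_le ((l : ℝ) * a)
    linarith [this]

lemma aux_sum_eq_integral (n : ℕ) (Θ : Set (Fin n → ℝ)) (hΘm : MeasurableSet Θ)
    (hΘb : Bornology.IsBounded Θ) (φ : (Fin n → ℝ) → ℝ) (l : ℕ) (hl : 1 ≤ l) :
    (1 / (l : ℝ) ^ n) *
        ∑ᶠ e ∈ {e : Fin n → ℤ | (fun i => (e i : ℝ)) ∈ (l : ℝ) • Θ},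
          φ ((l : ℝ)⁻¹ • fun i => (e i : ℝ))
      = ∫ x : Fin n → ℝ, Θ.indicator φ (fun i => ((⌊(l : ℝ) * x i⌋ : ℤ) : ℝ) / l) := by
  have hL : (0 : ℝ) < l := by exact_mod_cast hl
  set L : ℝ := (l : ℝ) with hLdef
  set T : Set (Fin n → ℤ) := {e : Fin n → ℤ | (fun i => (e i : ℝ)) ∈ L • Θ} with hT
  -- finiteness of T
  have hTfin : T.Finite := by
    obtain ⟨R, hR⟩ := hΘb.subset_closedBall 0
    apply Set.Finite.subset (Set.finite_Icc (fun _ : Fin n => -(⌈L * R⌉)) fun _ => ⌈L * R⌉)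
    rintro e ⟨y, hy, hye⟩
    have hyR : ∀ i, |y i| ≤ R := by
      intro i
      have h1 : ‖y‖ ≤ R := by simpa [Metric.mem_closedBall] using hR hy
      exact le_trans (norm_le_pi_norm y i) h1
    constructor <;> intro i <;>
    · have h1 : (e i : ℝ) = L * y i := by
        have := congrFun hye i; simpa [Pi.smul_apply, smul_eq_mul] using this.symm
      have h2 : |(e i : ℝ)| ≤ L * R := by
        rw [h1, abs_mul, abs_of_pos hL]
        exact mul_le_mul_of_nonneg_left (hyR i) (le_of_lt hL)
      have h3 : |(e i : ℝ)| ≤ ((⌈L * R⌉ : ℤ) : ℝ) := le_trans h2 (Int.le_ceil _)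
      have h4 : |e i| ≤ ⌈L * R⌉ := by rwa [← Int.cast_abs, Int.cast_le] at h3
      have := abs_le.1 h4
      first
        | exact this.1
        | exact this.2
  -- membership in T gives membership of the rescaled point in Θ
  have hTΘ : ∀ e ∈ T, (fun i => (e i : ℝ) / L) ∈ Θ := by
    intro e he
    have h1 : L⁻¹ • (fun i => (e i : ℝ)) ∈ Θ :=
      (Set.mem_smul_set_iff_inv_smul_mem₀ (ne_of_gt hL) _ _).1 he
    have h2 : (L⁻¹ • fun i => (e i : ℝ)) = fun i => (e i : ℝ) / L := by
      funext i; simp [Pi.smul_apply, smul_eq_mul, inv_mul_eq_div]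
    rwa [h2] at h1
  -- cubes
  set cube : (Fin n → ℤ) → Set (Fin n → ℝ) :=
    fun e => Set.pi Set.univ fun i => Set.Ico ((e i : ℝ) / L) (((e i : ℝ) + 1) / L) with hcube
  have hmem : ∀ (e : Fin n → ℤ) (x : Fin n → ℝ), x ∈ cube e ↔ (fun i => ⌊L * x i⌋) = e := by
    intro e x
    rw [funext_iff]
    simp only [hcube, Set.mem_pi, Set.mem_univ, forall_true_left, Set.mem_Ico]
    refine forall_congr' fun i => ?_
    rw [div_le_iff₀ hL, lt_div_iff₀ hL, mul_comm (x i) L, Int.floor_eq_iff]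
  have hcube_meas : ∀ e, MeasurableSet (cube e) := fun e =>
    MeasurableSet.univ_pi fun i => measurableSet_Ico
  have hcube_vol : ∀ e, volume (cube e) = ENNReal.ofReal ((1 / L) ^ n) := by
    intro e
    rw [hcube]
    rw [volume_pi_pi]
    have : ∀ i : Fin n, volume (Set.Ico ((e i : ℝ) / L) (((e i : ℝ) + 1) / L))
        = ENNReal.ofReal (1 / L) := by
      intro i
      rw [Real.volume_Ico]
      congr 1
      field_simp
      ring
    simp only [this, Finset.prod_const, Finset.card_univ, Fintype.card_fin]
    rw [← ENNReal.ofReal_pow (by positivity)]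
  -- the integrand is constant on each cube
  have hconst : ∀ (e : Fin n → ℤ), ∀ x ∈ cube e,
      Θ.indicator φ (fun i => ((⌊L * x i⌋ : ℤ) : ℝ) / L)
        = Θ.indicator φ (fun i => (e i : ℝ) / L) := by
    intro e x hx
    have h1 := (hmem e x).1 hx
    have h2 : (fun i => ((⌊L * x i⌋ : ℤ) : ℝ) / L) = fun i => (e i : ℝ) / L := by
      funext i; rw [congrFun h1 i]
    rw [h2]
  -- support condition
  have hsupp : ∀ x : Fin n → ℝ, x ∉ ⋃ e ∈ hTfin.toFinset, cube e →
      Θ.indicator φ (fun i => ((⌊L * x i⌋ : ℤ) : ℝ) / L) = 0 := by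
    intro x hx
    by_contra h0
    apply hx
    have hmemΘ : (fun i => ((⌊L * x i⌋ : ℤ) : ℝ) / L) ∈ Θ := by
      by_contra hn
      exact h0 (Set.indicator_of_notMem hn φ)
    have heT : (fun i => ⌊L * x i⌋) ∈ T := by
      rw [hT, Set.mem_setOf_eq]
      have : (fun i => ((⌊L * x i⌋ : ℤ) : ℝ)) = L • fun i => ((⌊L * x i⌋ : ℤ) : ℝ) / L := by
        funext i; simp [Pi.smul_apply, smul_eq_mul]; field_simp
      rw [this]
      exact Set.smul_mem_smul_set hmemΘ
    refine Set.mem_biUnion (hTfin.mem_toFinset.2 heT) ?_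
    exact (hmem _ x).2 rfl
  -- pairwise disjoint
  have hdisj : (↑hTfin.toFinset : Set (Fin n → ℤ)).Pairwise (Function.onFun Disjoint cube) := by
    intro e _ e' _ hne
    rw [Function.onFun, Set.disjoint_left]
    intro x hx hx'
    exact hne (((hmem e x).1 hx).symm.trans ((hmem e' x).1 hx'))
  -- integrability on each cube
  have hint : ∀ e ∈ hTfin.toFinset, IntegrableOn
      (fun x => Θ.indicator φ (fun i => ((⌊L * x i⌋ : ℤ) : ℝ) / L)) (cube e) volume := by
    intro e _
    apply (integrableOn_const ?_).congr_fun (fun x hx => (hconst e x hx).symm) (hcube_meas e)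
    rw [hcube_vol e]; exact ENNReal.ofReal_ne_top
  -- main computation
  rw [← setIntegral_eq_integral_of_forall_compl_eq_zero hsupp,
    integral_biUnion_finset hTfin.toFinset (fun e _ => hcube_meas e) hdisj hint]
  have hterm : ∀ e ∈ hTfin.toFinset,
      ∫ x in cube e, Θ.indicator φ (fun i => ((⌊L * x i⌋ : ℤ) : ℝ) / L)
        = (1 / L ^ n) * φ ((L)⁻¹ • fun i => (e i : ℝ)) := by
    intro e he
    have heq : Set.EqOn (fun x => Θ.indicator φ (fun i => ((⌊L * x i⌋ : ℤ) : ℝ) / L))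
        (fun _ => φ (fun i => (e i : ℝ) / L)) (cube e) := by
      intro x hx
      exact (hconst e x hx).trans (Set.indicator_of_mem (hTΘ e (hTfin.mem_toFinset.1 he)) φ)
    have step1 : ∫ x in cube e, Θ.indicator φ (fun i => ((⌊L * x i⌋ : ℤ) : ℝ) / L)
        = ∫ _x in cube e, φ (fun i => (e i : ℝ) / L) :=
      setIntegral_congr_fun (hcube_meas e) heq
    rw [step1, setIntegral_const, Measure.real, hcube_vol, ENNReal.toReal_ofReal (by positivity), smul_eq_mul]
    congr 1
    · rw [one_div, one_div, ← inv_pow]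
    · congr 1
      funext i; simp [Pi.smul_apply, smul_eq_mul, inv_mul_eq_div]
  rw [Finset.sum_congr rfl hterm, ← Finset.mul_sum]
  rw [← finsum_mem_coe_finset, hTfin.coe_toFinset]

theorem stmt3 (n : ℕ) (Θ : Set (Fin n → ℝ))
    (hc : IsCompact Θ) (hconv : Convex ℝ Θ) (hvol : 0 < volume Θ)
    (φ : (Fin n → ℝ) → ℝ) (hconc : ConcaveOn ℝ Θ φ)
    (hbdd : ∃ M : ℝ, ∀ x ∈ Θ, |φ x| ≤ M) :
    Filter.Tendsto
      (fun l : ℕ => (1 / (l : ℝ) ^ n) *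
        ∑ᶠ e ∈ {e : Fin n → ℤ | (fun i => (e i : ℝ)) ∈ (l : ℝ) • Θ},
          φ ((l : ℝ)⁻¹ • fun i => (e i : ℝ)))
      Filter.atTop (nhds (∫ x in Θ, φ x)) := by
  obtain ⟨M, hM⟩ := hbdd
  have hΘm : MeasurableSet Θ := hc.isClosed.measurableSet
  set f : (Fin n → ℝ) → ℝ := Θ.indicator φ with hf
  set G : ℕ → (Fin n → ℝ) → ℝ :=
    fun l x => f (fun i => ((⌊(l : ℝ) * x i⌋ : ℤ) : ℝ) / l) with hG
  have hmain : Filter.Tendsto (fun l => ∫ x, G l x) Filter.atTop (nhds (∫ x, f x)) := by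
    apply MeasureTheory.tendsto_integral_filter_of_dominated_convergence
      ((Metric.cthickening 1 Θ).indicator fun _ => |M|)
    · -- measurability
      apply Filter.Eventually.of_forall
      intro l
      have h1 : Measurable (fun x : Fin n → ℝ => fun i => ⌊(l : ℝ) * x i⌋) :=
        measurable_pi_lambda _ fun i =>
          Int.measurable_floor.comp ((measurable_pi_apply i).const_mul _)
      exact ((measurable_of_countable
        (fun e : Fin n → ℤ => f (fun i => ((e i : ℤ) : ℝ) / l))).comp h1).aestronglyMeasurable
    · -- bound
      filter_upwards [Filter.eventually_ge_atTop 1] with l hl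
      apply Filter.Eventually.of_forall
      intro x
      by_cases h0 : G l x = 0
      · rw [h0, norm_zero]
        exact Set.indicator_nonneg (fun _ _ => abs_nonneg M) x
      · have hL : (0 : ℝ) < l := by exact_mod_cast hl
        have hmemΘ : (fun i => ((⌊(l : ℝ) * x i⌋ : ℤ) : ℝ) / l) ∈ Θ := by
          by_contra hn
          exact h0 (Set.indicator_of_notMem hn φ)
        have hxthick : x ∈ Metric.cthickening 1 Θ := by
          refine Metric.mem_cthickening_of_dist_le x _ 1 Θ hmemΘ ?_
          rw [dist_pi_le_iff one_pos.le]
          intro i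
          have h1 := Int.floor_le ((l : ℝ) * x i)
          have h2 := Int.lt_floor_add_one ((l : ℝ) * x i)
          have e1 : ((⌊(l : ℝ) * x i⌋ : ℤ) : ℝ) / l ≤ x i := by
            rw [div_le_iff₀ hL, mul_comm (x i) ((l:ℕ):ℝ)]; exact h1
          have e2 : x i < (((⌊(l : ℝ) * x i⌋ : ℤ) : ℝ) + 1) / l := by
            rw [lt_div_iff₀ hL, mul_comm (x i) ((l:ℕ):ℝ)]; exact h2
          have hl1 : 1 / (l : ℝ) ≤ 1 := by
            rw [div_le_one hL]; exact_mod_cast hl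
          rw [Real.dist_eq, abs_le]
          constructor
          · linarith
          · have : x i - ((⌊(l : ℝ) * x i⌋ : ℤ) : ℝ) / l < 1 / l := by
              have : (((⌊(l : ℝ) * x i⌋ : ℤ) : ℝ) + 1) / l
                  = ((⌊(l : ℝ) * x i⌋ : ℤ) : ℝ) / l + 1 / l := by ring
              linarith
            linarith
        rw [Set.indicator_of_mem hxthick]
        have : ‖G l x‖ = |φ (fun i => ((⌊(l : ℝ) * x i⌋ : ℤ) : ℝ) / l)| := by
          simp only [hG, hf, Real.norm_eq_abs]
          rw [Set.indicator_of_mem hmemΘ]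
        rw [this]
        exact le_trans (hM _ hmemΘ) (le_abs_self M)
    · -- integrable bound
      rw [integrable_indicator_iff Metric.isClosed_cthickening.measurableSet]
      exact integrableOn_const (hc.cthickening.measure_lt_top.ne)
    · -- a.e. limit
      have hfront : volume (frontier Θ) = 0 := hconv.addHaar_frontier volume
      filter_upwards [MeasureTheory.measure_eq_zero_iff_ae_notMem.mp hfront] with x hx
      have hcx : Filter.Tendsto (fun l : ℕ => fun i => ((⌊(l : ℝ) * x i⌋ : ℤ) : ℝ) / l)
          Filter.atTop (nhds x) := by
        rw [tendsto_pi_nhds]; intro i; exact aux_floor_tendsto (x i)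
      have hcases : x ∈ interior Θ ∨ x ∉ closure Θ := by
        by_cases hcl : x ∈ closure Θ
        · left
          by_contra hint
          exact hx ⟨hcl, hint⟩
        · right; exact hcl
      rcases hcases with hin | hout
      · have hev : ∀ᶠ l : ℕ in Filter.atTop,
            (fun i => ((⌊(l : ℝ) * x i⌋ : ℤ) : ℝ) / l) ∈ interior Θ :=
          hcx (isOpen_interior.mem_nhds hin)
        have hφc : ContinuousAt φ x :=
          (hconc.continuousOn_interior).continuousAt (isOpen_interior.mem_nhds hin)
        have hten : Filter.Tendsto
            (fun l : ℕ => φ (fun i => ((⌊(l : ℝ) * x i⌋ : ℤ) : ℝ) / l))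
            Filter.atTop (nhds (φ x)) := hφc.tendsto.comp hcx
        have hfx : f x = φ x := Set.indicator_of_mem (interior_subset hin) φ
        rw [hfx]
        apply Filter.Tendsto.congr' _ hten
        filter_upwards [hev] with l hl
        exact (Set.indicator_of_mem (interior_subset hl) φ).symm
      · have hfx : f x = 0 := Set.indicator_of_notMem (fun h => hout (subset_closure h)) φ
        rw [hfx]
        have hev : ∀ᶠ l : ℕ in Filter.atTop,
            (fun i => ((⌊(l : ℝ) * x i⌋ : ℤ) : ℝ) / l) ∈ (closure Θ)ᶜ :=
          hcx (isClosed_closure.isOpen_compl.mem_nhds hout)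
        apply Filter.Tendsto.congr' _ tendsto_const_nhds
        filter_upwards [hev] with l hl
        exact (Set.indicator_of_notMem (fun h => hl (subset_closure h)) φ).symm
  have hfinal : (fun l : ℕ => ∫ x, G l x) =ᶠ[Filter.atTop]
      (fun l : ℕ => (1 / (l : ℝ) ^ n) *
        ∑ᶠ e ∈ {e : Fin n → ℤ | (fun i => (e i : ℝ)) ∈ (l : ℝ) • Θ},
          φ ((l : ℝ)⁻¹ • fun i => (e i : ℝ))) := by
    filter_upwards [Filter.eventually_ge_atTop 1] with l hl
    exact (aux_sum_eq_integral n Θ hΘm hc.isBounded φ l hl).symm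
  have hfin := hmain.congr' hfinal
  rwa [hf, integral_indicator hΘm] at hfin
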